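/- arXiv:0805.3155 — 2 statements merged into one kernel-verified Lean document; each statement's English description precedes it below -/
import Mathlib

section
/- Let k ≥ 1 be an integer, s ≥ 0 and α ∈ [0,1], and define f_α(x) = 1 − (1−α) g_{k,s}(x) with g_{k,s}(x) = ∑_{i=0}^{⌊s⌋} C(k,i) x^i (1−x)^{k−i}. Define the sequence h(0) = α and h(t+1) = f_α(h(t)) for t ≥ 0. Then the sequence (h(t))_{t≥0} is monotone nondecreasing and contained in [α,1]. -/
/-- `binCdf k s x = P(Bin(k,x) ≤ s) = ∑_{i=0}^{⌊s⌋} C(k,i) x^i (1-x)^{k-i}`,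
the function `g_{k,s}(x)` of the paper. -/
noncomputable def binCdf (k : ℕ) (s : ℝ) (x : ℝ) : ℝ :=
  ∑ i ∈ Finset.range (⌊s⌋₊ + 1), (k.choose i : ℝ) * x ^ i * (1 - x) ^ (k - i)

open Finset

lemma sum_full (k : ℕ) (x : ℝ) :
    ∑ i ∈ range (k+1), (k.choose i : ℝ) * x ^ i * (1 - x) ^ (k - i) = 1 := by
  have h1 := add_pow x (1 - x) k
  simp only [add_sub_cancel, one_pow] at h1
  have h2 : ∑ i ∈ range (k+1), (k.choose i : ℝ) * x ^ i * (1 - x) ^ (k - i)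
      = ∑ i ∈ range (k+1), x ^ i * (1 - x) ^ (k - i) * (k.choose i : ℝ) :=
    Finset.sum_congr rfl fun i _ => by ring
  rw [h2, ← h1]

lemma term_nonneg (k i : ℕ) {x : ℝ} (hx : x ∈ Set.Icc (0:ℝ) 1) :
    0 ≤ (k.choose i : ℝ) * x ^ i * (1 - x) ^ (k - i) := by
  obtain ⟨h0, h1⟩ := hx
  exact mul_nonneg (mul_nonneg (Nat.cast_nonneg _) (pow_nonneg h0 _))
    (pow_nonneg (by linarith) _)

lemma binCdf_nonneg (k : ℕ) (s : ℝ) {x : ℝ} (hx : x ∈ Set.Icc (0:ℝ) 1) :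
    0 ≤ binCdf k s x :=
  Finset.sum_nonneg fun i _ => term_nonneg k i hx

lemma binCdf_le_one (k : ℕ) (s : ℝ) {x : ℝ} (hx : x ∈ Set.Icc (0:ℝ) 1) :
    binCdf k s x ≤ 1 := by
  unfold binCdf
  rcases le_or_gt (⌊s⌋₊ + 1) (k + 1) with hle | hlt
  · calc _ ≤ ∑ i ∈ range (k+1), (k.choose i : ℝ) * x ^ i * (1 - x) ^ (k - i) :=
        Finset.sum_le_sum_of_subset_of_nonneg (Finset.range_subset_range.2 hle)
          (fun i _ _ => term_nonneg k i hx)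
    _ = 1 := sum_full k x
  · rw [← Finset.sum_subset (Finset.range_subset_range.2 hlt.le)
      (fun i _ hi => by
        rw [Finset.mem_range, not_lt] at hi
        simp [Nat.choose_eq_zero_of_lt (by omega : k < i)])]
    exact (sum_full k x).le

lemma term_hasDerivAt (k i : ℕ) (x : ℝ) :
    HasDerivAt (fun x : ℝ => (k.choose i : ℝ) * x ^ i * (1 - x) ^ (k - i))
      ((k.choose i : ℝ) * ((i : ℝ) * x ^ (i-1) * (1 - x) ^ (k - i)
        - ((k - i : ℕ) : ℝ) * x ^ i * (1 - x) ^ (k - i - 1))) x := by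
  have h1 : HasDerivAt (fun x : ℝ => x ^ i) ((i : ℝ) * x ^ (i - 1)) x := hasDerivAt_pow i x
  have h2 : HasDerivAt (fun x : ℝ => (1 - x) ^ (k - i))
      (-(((k - i : ℕ) : ℝ) * (1 - x) ^ (k - i - 1))) x := by
    have hin : HasDerivAt (fun x : ℝ => 1 - x) (-1) x := by
      simpa using (hasDerivAt_const x (1:ℝ)).fun_sub (hasDerivAt_id x)
    have := (hasDerivAt_pow (k - i) (1 - x)).comp x hin
    simpa [Function.comp_def, mul_comm, mul_assoc, mul_left_comm] using this
  have := (h1.mul h2).const_mul ((k.choose i : ℝ))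
  refine (this.congr_deriv (by ring)).congr_of_eventuallyEq (Filter.Eventually.of_forall fun y => ?_)
  simp only [Pi.mul_apply]; ring

lemma binCdf_hasDerivAt (k : ℕ) (s : ℝ) (x : ℝ) :
    HasDerivAt (binCdf k s)
      (-((k.choose (⌊s⌋₊ + 1) : ℝ) * ((⌊s⌋₊ : ℝ) + 1) * x ^ ⌊s⌋₊
          * (1 - x) ^ (k - (⌊s⌋₊ + 1)))) x := by
  set m := ⌊s⌋₊ with hm
  set a : ℕ → ℝ := fun j => (k.choose j : ℝ) * (j : ℝ) * x ^ (j - 1) * (1 - x) ^ (k - j)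
    with ha
  have hsum : HasDerivAt (binCdf k s) (∑ i ∈ range (m + 1), (a i - a (i + 1))) x := by
    apply HasDerivAt.fun_sum
    intro i _
    have hD := term_hasDerivAt k i x
    convert hD using 1
    · rfl
    · rfl
    have hid : (k.choose (i+1) : ℝ) * ((i : ℝ) + 1) = (k.choose i : ℝ) * ((k - i : ℕ) : ℝ) := by
      have h := Nat.choose_succ_right_eq k i
      exact_mod_cast h
    simp only [ha, Nat.succ_sub_one, Nat.cast_add, Nat.cast_one]
    have hexp : k - (i + 1) = k - i - 1 := by omega
    rw [hexp]
    calc (k.choose i : ℝ) * (i : ℝ) * x ^ (i - 1) * (1 - x) ^ (k - i)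
          - (k.choose (i+1) : ℝ) * ((i:ℝ) + 1) * x ^ i * (1 - x) ^ (k - i - 1)
        = (k.choose i : ℝ) * (i : ℝ) * x ^ (i - 1) * (1 - x) ^ (k - i)
          - (k.choose i : ℝ) * ((k - i : ℕ) : ℝ) * x ^ i * (1 - x) ^ (k - i - 1) := by
          rw [hid]
      _ = _ := by ring
  rw [Finset.sum_range_sub' a (m + 1)] at hsum
  have ha0 : a 0 = 0 := by simp [ha]
  rw [ha0, zero_sub] at hsum
  convert hsum using 2
  · rfl
  simp [ha]

lemma binCdf_antitoneOn (k : ℕ) (s : ℝ) : AntitoneOn (binCdf k s) (Set.Icc 0 1) := by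
  apply antitoneOn_of_deriv_nonpos (convex_Icc 0 1)
  · exact fun x _ => ((binCdf_hasDerivAt k s x).differentiableAt.continuousAt).continuousWithinAt
  · exact fun x _ => (binCdf_hasDerivAt k s x).differentiableAt.differentiableWithinAt
  · intro x hx
    rw [interior_Icc] at hx
    rw [(binCdf_hasDerivAt k s x).deriv]
    have h1 : (0:ℝ) ≤ x := hx.1.le
    have h2 : (0:ℝ) ≤ 1 - x := by linarith [hx.2]
    have : 0 ≤ (k.choose (⌊s⌋₊ + 1) : ℝ) * ((⌊s⌋₊ : ℝ) + 1) * x ^ ⌊s⌋₊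
        * (1 - x) ^ (k - (⌊s⌋₊ + 1)) := by positivity
    linarith

/-- The iterates `h(0) = α`, `h(t+1) = 1 − (1−α) g_{k,s}(h(t))` form a monotone
nondecreasing sequence contained in `[α,1]`. -/
theorem iterates_monotone_mem_Icc (k : ℕ) (hk : 1 ≤ k) (s : ℝ) (hs : 0 ≤ s)
    (α : ℝ) (hα : α ∈ Set.Icc (0 : ℝ) 1) (h : ℕ → ℝ) (h0 : h 0 = α)
    (hrec : ∀ t : ℕ, h (t + 1) = 1 - (1 - α) * binCdf k s (h t)) :
    Monotone h ∧ ∀ t : ℕ, h t ∈ Set.Icc α 1 := by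
  obtain ⟨hα0, hα1⟩ := hα
  -- the map sends [α,1] into [α,1]
  have hmap : ∀ x : ℝ, x ∈ Set.Icc α 1 → (1 - (1 - α) * binCdf k s x) ∈ Set.Icc α 1 := by
    intro x hx
    have hx01 : x ∈ Set.Icc (0:ℝ) 1 := ⟨le_trans hα0 hx.1, hx.2⟩
    have hg0 := binCdf_nonneg k s hx01
    have hg1 := binCdf_le_one k s hx01
    have h1α : (0:ℝ) ≤ 1 - α := by linarith
    constructor
    · nlinarith
    · nlinarith
  have key : ∀ t : ℕ, h t ∈ Set.Icc α 1 ∧ h t ≤ h (t + 1) := by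
    intro t
    induction t with
    | zero =>
      refine ⟨by rw [h0]; exact ⟨le_refl _, hα1⟩, ?_⟩
      rw [h0, hrec 0, h0]
      have := (hmap α ⟨le_refl _, hα1⟩).1
      linarith
    | succ n ih =>
      obtain ⟨hmem, hle⟩ := ih
      have hmem' : h (n + 1) ∈ Set.Icc α 1 := by
        rw [hrec n]; exact hmap _ hmem
      refine ⟨hmem', ?_⟩
      rw [hrec n, hrec (n+1)]
      have h01a : h n ∈ Set.Icc (0:ℝ) 1 := ⟨le_trans hα0 hmem.1, hmem.2⟩
      have h01b : h (n+1) ∈ Set.Icc (0:ℝ) 1 := ⟨le_trans hα0 hmem'.1, hmem'.2⟩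
      have hgle : binCdf k s (h (n+1)) ≤ binCdf k s (h n) :=
        binCdf_antitoneOn k s h01a h01b hle
      have h1α : (0:ℝ) ≤ 1 - α := by linarith
      nlinarith
  exact ⟨monotone_nat_of_le_succ fun t => (key t).2, fun t => (key t).1⟩
end

section
/- Let Δ ≥ 3 be an integer and θ a real number with 0 ≤ θ < Δ − 2, and for α ∈ (0,1) define f_α(x) = 1 − (1−α) g_{Δ−1,θ}(x), where g_{k,s}(x) = ∑_{i=0}^{⌊s⌋} C(k,i) x^i (1−x)^{k−i}. Then there exists α_crit < 1 such that: for every α with α_crit < α < 1, the equation h = f_α(h) has a unique solution in [0,1], namely h = 1; and for every α with 0 < α < α_crit, the equation h = f_α(h) has exactly three solutions h* < h** < h*** = 1 in [0,1]. -/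
open Finset Set

namespace FPAux

noncomputable def G (k m : ℕ) (u : ℝ) : ℝ :=
  ∑ i ∈ Finset.range (m + 1), (k.choose i : ℝ) * (1 - u) ^ i * u ^ (k - i)

noncomputable def H (k m : ℕ) (u : ℝ) : ℝ :=
  ∑ i ∈ Finset.range (m + 1), (k.choose i : ℝ) * (1 - u) ^ i * u ^ (k - i - 2)

noncomputable def psi (k m : ℕ) (u : ℝ) : ℝ := u * H k m u

noncomputable def T (k m : ℕ) (u : ℝ) : ℝ :=
  (((k - m) * k.choose m : ℕ) : ℝ) * u ^ (k - m) * (1 - u) ^ m - G k m u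

lemma G_hasDerivAt (k : ℕ) : ∀ m : ℕ, m + 1 ≤ k → ∀ u : ℝ,
    HasDerivAt (G k m)
      ((((k - m) * k.choose m : ℕ) : ℝ) * (1 - u) ^ m * u ^ (k - m - 1)) u := by
  intro m
  induction m with
  | zero =>
      intro hk u
      have h : G k 0 = fun v : ℝ => v ^ k := by
        funext v; simp [G]
      rw [h]
      have := hasDerivAt_pow k u
      convert this using 1
      · rfl
      simp
  | succ m ih =>
      intro hk u
      have hmk : m + 1 ≤ k := by omega
      obtain ⟨r, rfl⟩ : ∃ r, k = m + 2 + r := ⟨k - (m + 2), by omega⟩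
      have hG : G (m + 2 + r) (m + 1) = fun v : ℝ =>
          G (m + 2 + r) m v +
            ((m + 2 + r).choose (m + 1) : ℝ) * ((1 - v) ^ (m + 1) * v ^ (r + 1)) := by
        funext v
        rw [G, Finset.sum_range_succ]
        have : m + 2 + r - (m + 1) = r + 1 := by omega
        rw [this, ← G]
        ring
      rw [hG]
      have h1 : HasDerivAt (fun v : ℝ => (1 - v) ^ (m + 1))
          ((↑(m + 1) * (1 - u) ^ m) * (-1)) u := by
        have := ((hasDerivAt_id u).const_sub 1).pow (m + 1)
        exact this.congr_deriv (by simp)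
      have h2 := hasDerivAt_pow (r + 1) u
      have hterm := ((h1.mul h2).const_mul (((m + 2 + r).choose (m + 1) : ℝ)))
      have := (ih hmk u).add hterm
      convert this using 1
      · rfl
      · rfl
      · rfl
      -- arithmetic identity
      have e1 : m + 2 + r - m = r + 2 := by omega
      have e2 : m + 2 + r - m - 1 = r + 1 := by omega
      have e3 : m + 2 + r - (m + 1) = r + 1 := by omega
      have e4 : m + 2 + r - (m + 1) - 1 = r := by omega
      rw [e2, e1, e4, e3]
      have hc : ((m + 2 + r).choose (m + 1) : ℝ) * (m + 1)
          = ((m + 2 + r).choose m : ℝ) * (r + 2) := by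
        have h' := Nat.choose_succ_right_eq (m + 2 + r) m
        rw [e1] at h'
        exact_mod_cast h'
      push_cast
      linear_combination ((1 - u) ^ m * u ^ (r + 1)) * hc


lemma G_eq (k m : ℕ) (hm : m + 2 ≤ k) (u : ℝ) : G k m u = u * psi k m u := by
  rw [G, psi, H, Finset.mul_sum, Finset.mul_sum]
  refine Finset.sum_congr rfl fun i hi => ?_
  have hik : i ≤ m := by
    have := Finset.mem_range.mp hi; omega
  have hp : u ^ (k - i) = u ^ 2 * u ^ (k - i - 2) := by
    rw [← pow_add]; congr 1; omega
  rw [hp]; ring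

lemma G_zero (k m : ℕ) (hm : m + 2 ≤ k) : G k m 0 = 0 := by
  rw [G]
  refine Finset.sum_eq_zero fun i hi => ?_
  have hik : i ≤ m := by have := Finset.mem_range.mp hi; omega
  have : k - i ≠ 0 := by omega
  simp [zero_pow this]

lemma G_one (k m : ℕ) : G k m 1 = 1 := by
  rw [G]
  rw [Finset.sum_eq_single 0]
  · simp
  · intro i _ hi; simp [zero_pow hi]
  · intro h; simp at h

lemma H_one (k m : ℕ) : H k m 1 = 1 := by
  rw [H]
  rw [Finset.sum_eq_single 0]
  · simp
  · intro i _ hi; simp [zero_pow hi]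
  · intro h; simp at h

lemma psi_zero (k m : ℕ) : psi k m 0 = 0 := by simp [psi]

lemma psi_one (k m : ℕ) : psi k m 1 = 1 := by simp [psi, H_one]

lemma H_diff (k m : ℕ) : Differentiable ℝ (H k m) := by
  unfold H
  refine Differentiable.fun_sum fun i _ => ?_
  exact ((differentiable_const _).mul
    (((differentiable_const _).sub differentiable_id).pow i)).mul (differentiable_pow _)

lemma psi_diff (k m : ℕ) : Differentiable ℝ (psi k m) := by
  unfold psi
  exact differentiable_id.mul (H_diff k m)

lemma psi_cont (k m : ℕ) : Continuous (psi k m) := (psi_diff k m).continuous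



lemma psi_deriv (k m : ℕ) (hm : m + 2 ≤ k) (u : ℝ) (hu : u ≠ 0) :
    deriv (psi k m) u = T k m u / u ^ 2 := by
  have hH : HasDerivAt (psi k m) (deriv (psi k m) u) u :=
    ((psi_diff k m) u).hasDerivAt
  have hd : HasDerivAt (fun v : ℝ => v * psi k m v)
      (1 * psi k m u + u * deriv (psi k m) u) u :=
    (hasDerivAt_id u).mul hH
  have hGfun : G k m = fun v : ℝ => v * psi k m v := funext fun v => G_eq k m hm v
  rw [← hGfun] at hd
  have huniq := (G_hasDerivAt k m (by omega) u).unique hd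
  have hpow : u ^ (k - m) = u * u ^ (k - m - 1) := by
    rw [← pow_succ']; congr 1; omega
  rw [eq_div_iff (pow_ne_zero 2 hu), T]
  simp only [hGfun]
  rw [hpow]
  push_cast at huniq ⊢
  linear_combination (-u) * huniq

lemma T_hasDerivAt (k m : ℕ) (hm : m + 2 ≤ k) (hm1 : 1 ≤ m) (u : ℝ) :
    HasDerivAt (T k m)
      ((((k - m) * k.choose m : ℕ) : ℝ) * (u ^ (k - m - 1) * (1 - u) ^ (m - 1) *
        (((k : ℝ) - m - 1) - ((k : ℝ) - 1) * u))) u := by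
  obtain ⟨r, rfl⟩ : ∃ r, k = m + 2 + r := ⟨k - (m + 2), by omega⟩
  obtain ⟨p, rfl⟩ : ∃ p, m = p + 1 := ⟨m - 1, by omega⟩
  have e1 : p + 1 + 2 + r - (p + 1) = r + 2 := by omega
  have e2 : p + 1 + 2 + r - (p + 1) - 1 = r + 1 := by omega
  have h1 := hasDerivAt_pow (r + 2) u
  have h2 : HasDerivAt (fun v : ℝ => (1 - v) ^ (p + 1))
      ((↑(p + 1) * (1 - u) ^ p) * (-1)) u := by
    have := ((hasDerivAt_id u).const_sub 1).pow (p + 1)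
    exact this.congr_deriv (by simp)
  have hmain := ((h1.const_mul
      ((((p + 1 + 2 + r - (p + 1)) * (p + 1 + 2 + r).choose (p + 1) : ℕ)) : ℝ)).mul h2).sub
    (G_hasDerivAt (p + 1 + 2 + r) (p + 1) (by omega) u)
  have hTfun : T (p + 1 + 2 + r) (p + 1) = fun v : ℝ =>
      ((((p + 1 + 2 + r - (p + 1)) * (p + 1 + 2 + r).choose (p + 1) : ℕ)) : ℝ) * v ^ (r + 2) *
        (1 - v) ^ (p + 1) - G (p + 1 + 2 + r) (p + 1) v := by
    funext v; rw [T, e1]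
  rw [hTfun]
  convert hmain using 1
  · rfl
  · rfl
  · rfl
  have e5 : r + 2 - 1 = r + 1 := by omega
  have e6 : p + 1 - 1 = p := by omega
  rw [e2, e1, e5, e6]
  push_cast
  ring


lemma T_zero (k m : ℕ) (hm : m + 2 ≤ k) : T k m 0 = 0 := by
  have h : k - m ≠ 0 := by omega
  rw [T, G_zero k m hm, zero_pow h]
  ring

lemma T_one (k m : ℕ) (hm1 : 1 ≤ m) : T k m 1 = -1 := by
  have h : m ≠ 0 := by omega
  rw [T, G_one, sub_self, zero_pow h]
  ring

lemma key (k m : ℕ) (hm : m + 2 ≤ k) (hm1 : 1 ≤ m) :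
    ∃ u₁ : ℝ, 0 < u₁ ∧ u₁ < 1 ∧ StrictMonoOn (psi k m) (Icc 0 u₁) ∧
      StrictAntiOn (psi k m) (Icc u₁ 1) := by
  have hmk : m ≤ k := by omega
  have hc : (0:ℝ) < (((k - m) * k.choose m : ℕ) : ℝ) := by
    exact_mod_cast Nat.mul_pos (by omega) (Nat.choose_pos hmk)
  have hkR : (m + 2 : ℝ) ≤ (k : ℝ) := by exact_mod_cast hm
  have hm1R : (1 : ℝ) ≤ (m : ℝ) := by exact_mod_cast hm1
  have hk1 : (0:ℝ) < (k : ℝ) - 1 := by linarith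
  set u₀ : ℝ := ((k:ℝ) - m - 1) / ((k:ℝ) - 1) with hu₀def
  have hnum : (0:ℝ) < (k:ℝ) - m - 1 := by linarith
  have hu₀0 : 0 < u₀ := div_pos hnum hk1
  have hu₀1 : u₀ < 1 := (div_lt_one hk1).mpr (by linarith)
  have hu₀eq : ((k:ℝ) - 1) * u₀ = (k:ℝ) - m - 1 := by
    rw [hu₀def]; field_simp
  have hTd := T_hasDerivAt k m hm hm1
  have hTcont : Continuous (T k m) :=
    continuous_iff_continuousAt.mpr fun u => (hTd u).continuousAt
  -- T strictly increasing on [0, u₀]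
  have hTmono : StrictMonoOn (T k m) (Icc 0 u₀) := by
    apply strictMonoOn_of_deriv_pos (convex_Icc 0 u₀) hTcont.continuousOn
    intro x hx
    rw [interior_Icc] at hx
    rw [(hTd x).deriv]
    have hbr : 0 < ((k:ℝ) - m - 1) - ((k:ℝ) - 1) * x := by
      have := mul_lt_mul_of_pos_left hx.2 hk1
      rw [hu₀eq] at this
      linarith
    have hx1 : 0 < x := hx.1
    have hx2 : 0 < 1 - x := by
      have := hx.2; nlinarith [hu₀1]
    exact mul_pos hc (mul_pos (mul_pos (pow_pos hx1 _) (pow_pos hx2 _)) hbr)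
  -- T strictly decreasing on [u₀, 1]
  have hTanti : StrictAntiOn (T k m) (Icc u₀ 1) := by
    apply strictAntiOn_of_deriv_neg (convex_Icc u₀ 1) hTcont.continuousOn
    intro x hx
    rw [interior_Icc] at hx
    rw [(hTd x).deriv]
    have hbr : ((k:ℝ) - m - 1) - ((k:ℝ) - 1) * x < 0 := by
      have := mul_lt_mul_of_pos_left hx.1 hk1
      rw [hu₀eq] at this
      linarith
    have hx1 : 0 < x := lt_trans hu₀0 hx.1
    have hx2 : 0 < 1 - x := by linarith [hx.2]
    exact mul_neg_of_pos_of_neg hc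
      (mul_neg_of_pos_of_neg (mul_pos (pow_pos hx1 _) (pow_pos hx2 _)) hbr)
  have hTu₀ : 0 < T k m u₀ := by
    have := hTmono (left_mem_Icc.mpr hu₀0.le) (right_mem_Icc.mpr hu₀0.le) hu₀0
    rwa [T_zero k m hm] at this
  have hT1 : T k m 1 = -1 := T_one k m hm1
  -- root u₁ of T in (u₀, 1)
  have hIVT := intermediate_value_Ioo' hu₀1.le hTcont.continuousOn
  have h0mem : (0:ℝ) ∈ Ioo (T k m 1) (T k m u₀) := by
    constructor
    · rw [hT1]; norm_num
    · exact hTu₀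
  obtain ⟨u₁, hu₁mem, hTu₁⟩ := hIVT h0mem
  have hu₁0 : 0 < u₁ := lt_trans hu₀0 hu₁mem.1
  have hu₁1 : u₁ < 1 := hu₁mem.2
  -- T positive on (0, u₁), negative on (u₁, 1)
  have hTpos : ∀ x ∈ Ioo (0:ℝ) u₁, 0 < T k m x := by
    intro x hx
    rcases le_or_gt x u₀ with hle | hlt
    · have := hTmono (left_mem_Icc.mpr hu₀0.le) ⟨hx.1.le, hle⟩ hx.1
      rwa [T_zero k m hm] at this
    · have := hTanti ⟨hlt.le, by linarith [hx.2]⟩ ⟨hu₁mem.1.le, hu₁1.le⟩ hx.2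
      rwa [hTu₁] at this
  have hTneg : ∀ x ∈ Ioo u₁ (1:ℝ), T k m x < 0 := by
    intro x hx
    have := hTanti ⟨hu₁mem.1.le, hu₁1.le⟩ ⟨le_trans hu₁mem.1.le hx.1.le, hx.2.le⟩ hx.1
    rwa [hTu₁] at this
  refine ⟨u₁, hu₁0, hu₁1, ?_, ?_⟩
  · apply strictMonoOn_of_deriv_pos (convex_Icc 0 u₁) (psi_cont k m).continuousOn
    intro x hx
    rw [interior_Icc] at hx
    rw [psi_deriv k m hm x (ne_of_gt hx.1)]
    exact div_pos (hTpos x hx) (pow_pos hx.1 2)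
  · apply strictAntiOn_of_deriv_neg (convex_Icc u₁ 1) (psi_cont k m).continuousOn
    intro x hx
    rw [interior_Icc] at hx
    have hx0 : 0 < x := lt_trans hu₁0 hx.1
    rw [psi_deriv k m hm x (ne_of_gt hx0)]
    exact div_neg_of_neg_of_pos (hTneg x hx) (pow_pos hx0 2)

end FPAux

/-- Main discrete-time theorem: for `Δ ≥ 3` and `0 ≤ θ < Δ − 2` there is a critical
value `α_crit < 1` such that for `α_crit < α < 1` the fixed point equation
`h = 1 − (1−α) g_{Δ−1,θ}(h)` has the unique solution `h = 1` in `[0,1]`, while for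
`0 < α < α_crit` it has exactly three solutions `h* < h** < h*** = 1`. -/
theorem fixedPoint_critical_alpha (Δ : ℕ) (hΔ : 3 ≤ Δ) (θ : ℝ)
    (hθ0 : 0 ≤ θ) (hθ : θ < (Δ : ℝ) - 2) :
    ∃ αcrit : ℝ, αcrit < 1 ∧
      (∀ α : ℝ, αcrit < α → α < 1 →
        {h : ℝ | h ∈ Set.Icc (0 : ℝ) 1 ∧ 1 - (1 - α) * binCdf (Δ - 1) θ h = h} = {1}) ∧
      (∀ α : ℝ, 0 < α → α < αcrit →
        ∃ h₁ h₂ h₃ : ℝ, h₁ < h₂ ∧ h₂ < h₃ ∧ h₃ = 1 ∧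
          {h : ℝ | h ∈ Set.Icc (0 : ℝ) 1 ∧ 1 - (1 - α) * binCdf (Δ - 1) θ h = h} =
            {h₁, h₂, h₃}) := by
  set k := Δ - 1 with hkdef
  set m := ⌊θ⌋₊ with hmdef
  have hm : m + 2 ≤ k := by
    have h1 : (m : ℝ) ≤ θ := Nat.floor_le hθ0
    have h2 : (m : ℝ) < (Δ : ℝ) - 2 := lt_of_le_of_lt h1 hθ
    have h3 : ((Δ - 2 : ℕ) : ℝ) = (Δ : ℝ) - 2 := by
      have : (2:ℕ) ≤ Δ := by omega
      push_cast [Nat.cast_sub this]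
      ring
    rw [← h3] at h2
    have h4 : m < Δ - 2 := by exact_mod_cast h2
    omega
  have hbin : ∀ h : ℝ, binCdf (Δ - 1) θ h = FPAux.G k m (1 - h) := by
    intro h
    rw [binCdf, FPAux.G, ← hmdef, ← hkdef]
    exact Finset.sum_congr rfl fun i _ => by rw [sub_sub_cancel]
  have hmem : ∀ α : ℝ, α < 1 → ∀ h : ℝ,
      (h ∈ Set.Icc (0:ℝ) 1 ∧ 1 - (1 - α) * binCdf (Δ - 1) θ h = h) ↔
      (h ∈ Set.Icc (0:ℝ) 1 ∧ (h = 1 ∨ (1 - α) * FPAux.psi k m (1 - h) = 1)) := by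
    intro α hα h
    have h1α : (0:ℝ) < 1 - α := by linarith
    constructor
    · rintro ⟨hIcc, heq⟩
      refine ⟨hIcc, ?_⟩
      rw [hbin, FPAux.G_eq k m hm] at heq
      rcases eq_or_ne h 1 with h1 | h1
      · exact Or.inl h1
      · right
        have hu : 1 - h ≠ 0 := fun hc => h1 (by linarith)
        have h2 : (1 - h) * ((1 - α) * FPAux.psi k m (1 - h)) = (1 - h) * 1 := by
          linear_combination -heq
        exact mul_left_cancel₀ hu h2
    · rintro ⟨hIcc, hor⟩
      refine ⟨hIcc, ?_⟩
      rw [hbin, FPAux.G_eq k m hm]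
      rcases hor with h1 | hpsi
      · subst h1; simp
      · linear_combination (-(1-h)) * hpsi
  rcases Nat.eq_zero_or_pos m with hm0 | hm1
  · -- case m = 0 : αcrit = 0
    refine ⟨0, by norm_num, ?_, ?_⟩
    · intro α hα0 hα1
      ext h
      simp only [Set.mem_setOf_eq, Set.mem_singleton_iff]
      constructor
      · intro hS
        obtain ⟨hIcc, hor⟩ := (hmem α hα1 h).mp hS
        rcases hor with h1 | hpsi
        · exact h1
        · exfalso
          rw [hm0] at hpsi
          rw [Set.mem_Icc] at hIcc
          have hu0 : 0 ≤ 1 - h := by linarith [hIcc.2]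
          have hu1 : 1 - h ≤ 1 := by linarith [hIcc.1]
          have hH : FPAux.H k 0 (1 - h) = (1 - h) ^ (k - 2) := by
            simp [FPAux.H]
          have hpsival : FPAux.psi k 0 (1 - h) = (1 - h) * (1 - h) ^ (k - 2) := by
            rw [FPAux.psi, hH]
          have hb1 : FPAux.psi k 0 (1 - h) ≤ 1 := by
            rw [hpsival]
            have := pow_le_one₀ hu0 hu1 (n := k - 2)
            nlinarith
          have hb0 : 0 ≤ FPAux.psi k 0 (1 - h) := by
            rw [hpsival]
            positivity
          nlinarith [hpsi]
      · intro h1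
        subst h1
        exact (hmem α hα1 1).mpr ⟨Set.mem_Icc.mpr ⟨zero_le_one, le_refl 1⟩, Or.inl rfl⟩
    · intro α hα0 hαc
      exact absurd hαc (by linarith)
  · -- case m ≥ 1
    obtain ⟨u₁, hu₁0, hu₁1, hmono, hanti⟩ := FPAux.key k m hm hm1
    set M := FPAux.psi k m u₁ with hMdef
    have hM1 : 1 < M := by
      have := hanti (Set.left_mem_Icc.mpr hu₁1.le) (Set.right_mem_Icc.mpr hu₁1.le) hu₁1
      rwa [FPAux.psi_one] at this
    have hM0 : 0 < M := by linarith
    have hinvM : 0 < 1 / M := by positivity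
    have hψle : ∀ u ∈ Set.Icc (0:ℝ) 1, FPAux.psi k m u ≤ M := by
      intro u hu
      rcases le_total u u₁ with h | h
      · exact hmono.monotoneOn ⟨hu.1, h⟩ ⟨hu₁0.le, le_refl u₁⟩ h
      · exact hanti.antitoneOn ⟨le_refl u₁, hu₁1.le⟩ ⟨h, hu.2⟩ h
    refine ⟨1 - 1 / M, by linarith, ?_, ?_⟩
    · intro α hαc hα1
      have h1α : (0:ℝ) < 1 - α := by linarith
      ext h
      simp only [Set.mem_setOf_eq, Set.mem_singleton_iff]
      constructor
      · intro hS
        obtain ⟨hIcc, hor⟩ := (hmem α hα1 h).mp hS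
        rcases hor with h1 | hpsi
        · exact h1
        · exfalso
          rw [Set.mem_Icc] at hIcc
          have hu : (1 - h) ∈ Set.Icc (0:ℝ) 1 :=
            Set.mem_Icc.mpr ⟨by linarith [hIcc.2], by linarith [hIcc.1]⟩
          have h1 := hψle _ hu
          have h2 : (1 - α) * FPAux.psi k m (1 - h) ≤ (1 - α) * M :=
            mul_le_mul_of_nonneg_left h1 h1α.le
          have h3 : (1 - α) * M < (1 / M) * M :=
            mul_lt_mul_of_pos_right (by linarith) hM0
          have h4 : (1 / M) * M = 1 := by field_simp
          linarith [hpsi]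
      · intro h1
        subst h1
        exact (hmem α hα1 1).mpr ⟨Set.mem_Icc.mpr ⟨zero_le_one, le_refl 1⟩, Or.inl rfl⟩
    · intro α hα0 hαc
      have hα1 : α < 1 := by linarith
      have h1α : (0:ℝ) < 1 - α := by linarith
      set v := 1 / (1 - α) with hvdef
      have hv1 : 1 < v := (one_lt_div h1α).mpr (by linarith)
      have hvM : v < M := by
        rw [hvdef, div_lt_iff₀ h1α]
        have h6 : 1 / M < 1 - α := by linarith
        calc (1:ℝ) = M * (1 / M) := by field_simp
          _ < M * (1 - α) := by
              exact mul_lt_mul_of_pos_left h6 hM0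
          _ = M * (1 - α) := rfl
      have hIVT1 := intermediate_value_Ioo hu₁0.le (FPAux.psi_cont k m).continuousOn
      have hvmem1 : v ∈ Set.Ioo (FPAux.psi k m 0) (FPAux.psi k m u₁) := by
        rw [FPAux.psi_zero]
        exact ⟨by linarith, hvM⟩
      obtain ⟨ua, hua, hpa⟩ := hIVT1 hvmem1
      have hIVT2 := intermediate_value_Ioo' hu₁1.le (FPAux.psi_cont k m).continuousOn
      have hvmem2 : v ∈ Set.Ioo (FPAux.psi k m 1) (FPAux.psi k m u₁) := by
        rw [FPAux.psi_one]
        exact ⟨hv1, hvM⟩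
      obtain ⟨ub, hub, hpb⟩ := hIVT2 hvmem2
      refine ⟨1 - ub, 1 - ua, 1, by linarith [hua.2, hub.1], by linarith [hua.1], rfl, ?_⟩
      ext h
      simp only [Set.mem_setOf_eq, Set.mem_insert_iff, Set.mem_singleton_iff]
      rw [hmem α hα1 h]
      constructor
      · rintro ⟨hIcc, hor⟩
        rcases hor with h1 | hpsi
        · exact Or.inr (Or.inr h1)
        · have hkey : FPAux.psi k m (1 - h) = v := by
            rw [hvdef, eq_div_iff h1α.ne']
            linear_combination hpsi
          rw [Set.mem_Icc] at hIcc
          have hIcc' : 0 ≤ 1 - h ∧ 1 - h ≤ 1 := ⟨by linarith [hIcc.2], by linarith [hIcc.1]⟩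
          rcases le_total (1 - h) u₁ with hle | hge
          · have := hmono.injOn ⟨hIcc'.1, hle⟩ ⟨hua.1.le, hua.2.le⟩ (by rw [hkey, hpa])
            exact Or.inr (Or.inl (by linarith [this]))
          · have := hanti.injOn ⟨hge, hIcc'.2⟩ ⟨hub.1.le, hub.2.le⟩ (by rw [hkey, hpb])
            exact Or.inl (by linarith [this])
      · intro hcase
        have hub0 : 0 < ub := lt_trans hu₁0 hub.1
        rcases hcase with h1 | h2 | h3
        · subst h1
          refine ⟨Set.mem_Icc.mpr ⟨by linarith [hub.2], by linarith [hub0]⟩, Or.inr ?_⟩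
          rw [sub_sub_cancel, hpb, hvdef]
          field_simp
        · subst h2
          refine ⟨Set.mem_Icc.mpr ⟨by linarith [hua.2, hu₁1], by linarith [hua.1]⟩, Or.inr ?_⟩
          rw [sub_sub_cancel, hpa, hvdef]
          field_simp
        · subst h3
          exact ⟨Set.mem_Icc.mpr ⟨zero_le_one, le_refl 1⟩, Or.inl rfl⟩
end
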